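/- Let v ∈ {0,1}^m be a binary string with R(v)_i > 0 for all i ∈ [m] and with R(v)_m ≤ 5√n + 1, where m = n + (7/2)√n + 1. Let N = n + (17/2)√n + 2 be even and w = wt(v). Then the string s = v 1^{N/2 − w} 0^{N/2 − (m − w)} has length N, weight N/2, and satisfies wt(s_1...s_i) ≥ floor(i/2) + 1 for all i ∈ [N−1]; i.e., s is a Dyck path. -/
import Mathlib


open Finset

def wtB {m : ℕ} (s : Fin m → Bool) : ℕ := ∑ i, if s i then 1 else 0

def onesPref {n : ℕ} (s : Fin n → Bool) (i : ℕ) : ℕ :=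
  ∑ j ∈ Finset.univ.filter (fun j : Fin n => (j : ℕ) < i), if s j then 1 else 0

def onesSuff {n : ℕ} (s : Fin n → Bool) (i : ℕ) : ℕ :=
  ∑ j ∈ Finset.univ.filter (fun j : Fin n => n - i ≤ (j : ℕ)), if s j then 1 else 0

/-- Prefix composition multiset: compositions (number of 0s, number of 1s) of all
prefixes of lengths 1,...,n. -/
def Mp {n : ℕ} (s : Fin n → Bool) : Multiset (ℕ × ℕ) :=
  (Multiset.range n).map (fun i => (i + 1 - onesPref s (i + 1), onesPref s (i + 1)))

/-- Suffix composition multiset. -/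
def Msf {n : ℕ} (s : Fin n → Bool) : Multiset (ℕ × ℕ) :=
  (Multiset.range n).map (fun i => (i + 1 - onesSuff s (i + 1), onesSuff s (i + 1)))

/-- Prefix-suffix composition multiset M(s). -/
def Mps {n : ℕ} (s : Fin n → Bool) : Multiset (ℕ × ℕ) := Mp s + Msf s

def RDSat {m : ℕ} (x : Fin m → Bool) (i : ℕ) : ℤ :=
  2 * (∑ j ∈ Finset.univ.filter (fun j : Fin m => (j : ℕ) < i), if x j then (1 : ℤ) else 0) - i

lemma onesPref_succ {n : ℕ} (s : Fin n → Bool) (i : ℕ) (h : i < n) :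
    onesPref s (i+1) = onesPref s i + (if s ⟨i, h⟩ then 1 else 0) := by
  unfold onesPref
  have hset : Finset.univ.filter (fun j : Fin n => (j : ℕ) < i + 1)
      = insert ⟨i, h⟩ (Finset.univ.filter (fun j : Fin n => (j : ℕ) < i)) := by
    ext j
    simp only [Finset.mem_filter, Finset.mem_insert, Finset.mem_univ, true_and]
    constructor
    · intro hj
      rcases Nat.lt_succ_iff_lt_or_eq.mp hj with h1 | h1
      · exact Or.inr h1
      · exact Or.inl (Fin.ext h1)
    · rintro (rfl | hj)
      · simp
      · omega
  rw [hset, Finset.sum_insert (by simp)]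
  ring

lemma onesPref_zero {n : ℕ} (s : Fin n → Bool) : onesPref s 0 = 0 := by
  unfold onesPref
  rw [Finset.sum_eq_zero]
  intro j hj
  simp at hj

lemma onesPref_of_le {n : ℕ} (s : Fin n → Bool) (i : ℕ) (h : n ≤ i) :
    onesPref s i = wtB s := by
  unfold onesPref wtB
  congr 1
  ext j
  simp only [Finset.mem_filter, Finset.mem_univ, true_and]
  exact ⟨fun _ => trivial, fun _ => lt_of_lt_of_le j.isLt h⟩

lemma rdsat_eq {n : ℕ} (v : Fin n → Bool) (i : ℕ) :
    RDSat v i = 2 * (onesPref v i : ℤ) - i := by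
  unfold RDSat onesPref
  congr 2
  rw [Nat.cast_sum]
  apply Finset.sum_congr rfl
  intro j _
  split <;> simp

/-- padding v (which has strictly positive running digital sums and
R(v)_m ≤ 5√n+1) with 1^{N/2 − w} 0^{N/2 − (m − w)} yields a Dyck path of length N. -/
theorem stmt9 (k : ℕ) (hk : 0 < k) (hke : Even k) (m N : ℕ)
    (hm : m = k * k + 7 * k / 2 + 1) (hN : N = k * k + 17 * k / 2 + 2) (hNe : Even N)
    (v : Fin m → Bool)
    (hpos : ∀ i : ℕ, 1 ≤ i → i ≤ m → 0 < RDSat v i)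
    (hend : RDSat v m ≤ 5 * (k : ℤ) + 1)
    (w : ℕ) (hw : w = wtB v) (hw1 : w ≤ N / 2) (hw2 : m - w ≤ N / 2)
    (s : Fin N → Bool)
    (hs1 : ∀ (i : Fin N) (j : Fin m), (i : ℕ) = (j : ℕ) → s i = v j)
    (hs2 : ∀ i : Fin N, m ≤ (i : ℕ) → (i : ℕ) < m + (N / 2 - w) → s i = true)
    (hs3 : ∀ i : Fin N, m + (N / 2 - w) ≤ (i : ℕ) → s i = false) :
    wtB s = N / 2 ∧ ∀ i : ℕ, 1 ≤ i → i ≤ N - 1 → i / 2 + 1 ≤ onesPref s i := by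
  -- basic size facts
  have hkk : 1 ≤ k := hk
  have hmN : m ≤ N := by omega
  have hm1 : 1 ≤ m := by omega
  have hN2 : N = N / 2 + N / 2 := by
    obtain ⟨t, ht⟩ := hNe; omega
  -- s agrees with v on first m positions
  have hagree : ∀ i : ℕ, i ≤ m → onesPref s i = onesPref v i := by
    intro i hi
    induction i with
    | zero => rw [onesPref_zero, onesPref_zero]
    | succ j ih =>
      have hjm : j < m := hi
      have hjN : j < N := lt_of_lt_of_le hjm hmN
      rw [onesPref_succ s j hjN, onesPref_succ v j hjm, ih (le_of_lt hjm)]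
      congr 1
      rw [hs1 ⟨j, hjN⟩ ⟨j, hjm⟩ rfl]
  have hwm : onesPref v m = w := by
    rw [onesPref_of_le v m le_rfl, hw]
  -- w ≤ m
  have hwlem : w ≤ m := by
    rw [hw]
    unfold wtB
    calc (∑ i : Fin m, if v i then 1 else 0) ≤ ∑ _i : Fin m, 1 := by
          apply Finset.sum_le_sum; intro i _; split <;> omega
      _ = m := by simp
  have hmw : m + (N / 2 - w) ≤ N := by omega
  -- region 2: for m ≤ i ≤ m + (N/2 - w), onesPref s i = w + (i - m)
  have hreg2 : ∀ i : ℕ, m ≤ i → i ≤ m + (N / 2 - w) → onesPref s i = w + (i - m) := by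
    intro i hi1 hi2
    induction i with
    | zero =>
      have : m = 0 := by omega
      omega
    | succ j ih =>
      rcases Nat.lt_or_ge m (j+1) with h1 | h1
      · have hjN : j < N := by omega
        rw [onesPref_succ s j hjN, ih (by omega) (by omega),
          hs2 ⟨j, hjN⟩ (by simpa using by omega) (by simpa using by omega)]
        simp
        omega
      · have : j + 1 = m := by omega
        rw [this, hagree m le_rfl, hwm]
        omega
  -- region 3: for m + (N/2 - w) ≤ i ≤ N, onesPref s i = N / 2
  have hreg3 : ∀ i : ℕ, m + (N / 2 - w) ≤ i → i ≤ N → onesPref s i = N / 2 := by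
    intro i hi1 hi2
    induction i with
    | zero =>
      have h0 : m + (N / 2 - w) = 0 := by omega
      rw [hreg2 0 (by omega) (by omega)]
      omega
    | succ j ih =>
      rcases Nat.lt_or_ge j (m + (N / 2 - w)) with h1 | h1
      · have : j + 1 = m + (N / 2 - w) := by omega
        rw [this, hreg2 _ (Nat.le_add_right _ _) le_rfl]
        omega
      · have hjN : j < N := by omega
        rw [onesPref_succ s j hjN, ih h1 (by omega),
          hs3 ⟨j, hjN⟩ (by simpa using h1)]
        simp
  constructor
  · rw [← onesPref_of_le s N le_rfl, hreg3 N hmw le_rfl]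
  · intro i hi1 hi2
    rcases Nat.lt_or_ge m i with hcase | hcase
    · rcases Nat.lt_or_ge (m + (N / 2 - w)) i with hc2 | hc2
      · rw [hreg3 i (by omega) (by omega)]
        omega
      · rw [hreg2 i (by omega) hc2]
        -- need 2*w > m : from hpos at m
        have := hpos m hm1 le_rfl
        rw [rdsat_eq, hwm] at this
        omega
    · rw [hagree i hcase]
      have := hpos i hi1 hcase
      rw [rdsat_eq] at this
      omega
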